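/- Let K be a real quadratic field with Galois conjugation x ↦ x', and let w₁,…,w_k, h₁,…,h_k, t₁,…,t_k ∈ K with all w_i, h_i > 0. Suppose that for every s ∈ K: Σ_{i=1}^k w_i ∧_ℚ (t_i − s·h_i) = 0 in ℝ ∧_ℚ ℝ, where the case s-term means Σ w_i ∧ t_i = 0 and Σ w_i ∧ (s·h_i) = 0 for all s ∈ K. Then Σ_{i=1}^k w_i·h'_i = 0 and Σ_{i=1}^k w'_i·h_i = 0. -/

import Mathlib

/-- The wedge product `a ∧_ℚ b` in the exterior algebra of `ℝ` over `ℚ`. -/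
noncomputable def wedge (a b : ℝ) : ExteriorAlgebra ℚ ℝ :=
  ExteriorAlgebra.ι ℚ a * ExteriorAlgebra.ι ℚ b


lemma wedge_expand (x : ℝ) (a b c d : ℚ) :
    wedge ((a : ℝ) + (b : ℝ) * x) ((c : ℝ) + (d : ℝ) * x)
      = (a * d - b * c) • wedge 1 x := by
  have ha : ((a : ℝ) + (b : ℝ) * x) = a • (1 : ℝ) + b • x := by
    simp [Rat.smul_def]
  have hc : ((c : ℝ) + (d : ℝ) * x) = c • (1 : ℝ) + d • x := by
    simp [Rat.smul_def]
  have swap : ExteriorAlgebra.ι ℚ x * ExteriorAlgebra.ι ℚ (1 : ℝ)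
      = -(ExteriorAlgebra.ι ℚ (1 : ℝ) * ExteriorAlgebra.ι ℚ x) :=
    eq_neg_of_add_eq_zero_left (by
      have := ExteriorAlgebra.ι_add_mul_swap (R := ℚ) (1 : ℝ) x
      linear_combination (norm := module) this)
  unfold wedge
  rw [ha, hc, map_add, map_add, map_smul, map_smul, map_smul, map_smul]
  simp only [add_mul, mul_add, smul_mul_assoc, mul_smul_comm,
    ExteriorAlgebra.ι_sq_zero, smul_zero, swap, smul_neg, smul_smul,
    zero_add, add_zero, sub_smul]
  module


/-- The alternating 2-form `v ↦ φ(v 0)ψ(v 1) − φ(v 1)ψ(v 0)`. -/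
noncomputable def alt2 (φ ψ : ℝ →ₗ[ℚ] ℚ) : ℝ [⋀^Fin 2]→ₗ[ℚ] ℚ where
  toFun v := φ (v 0) * ψ (v 1) - φ (v 1) * ψ (v 0)
  map_update_add' v i a b := by
    fin_cases i <;> (simp [Function.update_apply]; try ring)
  map_update_smul' v i c a := by
    fin_cases i <;> simp [Function.update_apply] <;> ring
  map_eq_zero_of_eq' v i j hv hij := by
    fin_cases i <;> fin_cases j <;> simp_all <;> ring

noncomputable def altFam (φ ψ : ℝ →ₗ[ℚ] ℚ) : ∀ i : ℕ, ℝ [⋀^Fin i]→ₗ[ℚ] ℚ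
  | 2 => alt2 φ ψ
  | _ => 0

lemma lift_wedge (φ ψ : ℝ →ₗ[ℚ] ℚ) (a b : ℝ) :
    ExteriorAlgebra.liftAlternating (altFam φ ψ) (wedge a b)
      = φ a * ψ b - φ b * ψ a := by
  unfold wedge
  rw [ExteriorAlgebra.liftAlternating_ι_mul, ExteriorAlgebra.liftAlternating_ι]
  show ((altFam φ ψ) 2).curryLeft a ![b] = _
  simp [alt2, altFam]

lemma wedge_one_ne_zero {x : ℝ} (hx : Irrational x) : wedge 1 x ≠ 0 := by
  have hli : LinearIndependent ℚ ![(1 : ℝ), x] := by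
    rw [LinearIndependent.pair_iff]
    intro s t hst
    by_cases ht : t = 0
    · subst ht
      simp only [zero_smul, add_zero] at hst
      have hs : (s : ℝ) = 0 := by
        have := hst
        simp only [Rat.smul_def, mul_one] at this
        exact this
      exact ⟨by exact_mod_cast hs, rfl⟩
    · exfalso
      apply hx
      refine ⟨-s / t, ?_⟩
      have : (s : ℝ) + (t : ℝ) * x = 0 := by simpa [Rat.smul_def] using hst
      push_cast
      field_simp
      linarith
  have hset : LinearIndepOn ℚ id (Set.range ![(1 : ℝ), x]) :=
    (linearIndepOn_id_range_iff hli.injective).mpr hli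
  set S := hset.extend (Set.subset_univ _) with hS
  let b : Module.Basis S ℚ ℝ := Module.Basis.extend hset
  have h1mem : (1 : ℝ) ∈ S := hset.subset_extend _ ⟨0, rfl⟩
  have hxmem : x ∈ S := hset.subset_extend _ ⟨1, rfl⟩
  have hne : (⟨1, h1mem⟩ : S) ≠ ⟨x, hxmem⟩ := by
    intro hcontra
    apply hx
    exact ⟨1, by simpa using congrArg Subtype.val hcontra⟩
  have hb1 : b ⟨1, h1mem⟩ = 1 := Module.Basis.extend_apply_self hset _
  have hbx : b ⟨x, hxmem⟩ = x := Module.Basis.extend_apply_self hset _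
  set φ := b.coord ⟨1, h1mem⟩
  set ψ := b.coord ⟨x, hxmem⟩
  intro hzero
  have := lift_wedge φ ψ 1 x
  rw [hzero, map_zero] at this
  have hφ1 : φ (1 : ℝ) = 1 := by
    rw [← hb1]; simp [φ, Module.Basis.coord_apply]
  have hψx : ψ x = 1 := by
    rw [← hbx]; simp [ψ, Module.Basis.coord_apply]
  have hφx : φ x = 0 := by
    rw [← hbx]; simp [φ, Module.Basis.coord_apply, Finsupp.single_apply, hne.symm]
  have hψ1 : ψ (1 : ℝ) = 0 := by
    rw [← hb1]; simp [ψ, Module.Basis.coord_apply, Finsupp.single_apply, hne]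
  rw [hφ1, hψx, hφx, hψ1] at this
  norm_num at this


/-- Calta's theorem (core): if for every `s ∈ K = ℚ(√f)` the invariant
`Σ w_i ∧ (t_i − s·h_i)` vanishes (i.e. `Σ w_i ∧ t_i = 0` and `Σ w_i ∧ (s·h_i) = 0` for
all `s ∈ K`), then `Σ w_i·h'_i = 0` and `Σ w'_i·h_i = 0`. -/
theorem stmt12 (f : ℕ) (hf : Squarefree f) (hf1 : 1 < f)
    (k : ℕ) (w h t w' h' : Fin k → ℝ)
    (aw bw ah bh at' bt : Fin k → ℚ)
    (hwdef : ∀ i, w i = (aw i : ℝ) + (bw i : ℝ) * Real.sqrt f)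
    (hw'def : ∀ i, w' i = (aw i : ℝ) - (bw i : ℝ) * Real.sqrt f)
    (hhdef : ∀ i, h i = (ah i : ℝ) + (bh i : ℝ) * Real.sqrt f)
    (hh'def : ∀ i, h' i = (ah i : ℝ) - (bh i : ℝ) * Real.sqrt f)
    (htdef : ∀ i, t i = (at' i : ℝ) + (bt i : ℝ) * Real.sqrt f)
    (hwpos : ∀ i, 0 < w i) (hhpos : ∀ i, 0 < h i)
    (hSAFt : ∑ i, wedge (w i) (t i) = 0)
    (hSAFs : ∀ sa sb : ℚ,
      ∑ i, wedge (w i) (((sa : ℝ) + (sb : ℝ) * Real.sqrt f) * h i) = 0) :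
    ∑ i, w i * h' i = 0 ∧ ∑ i, w' i * h i = 0 := by
  set x := Real.sqrt f with hxdef
  have hxx : x * x = (f : ℝ) := Real.mul_self_sqrt (by positivity)
  have hx : Irrational x := by
    rw [hxdef]
    refine irrational_sqrt_natCast_iff.mpr ?_
    rintro ⟨r, hr⟩
    have : IsUnit r := hf r (by rw [hr])
    rw [Nat.isUnit_iff] at this
    subst this
    simp at hr
    omega
  have hW := wedge_one_ne_zero hx
  -- s = 1 gives `∑ (aw·bh − bw·ah) = 0`
  have e1 : ∑ i, (aw i * bh i - bw i * ah i) = 0 := by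
    have h1 := hSAFs 1 0
    simp only [Rat.cast_one, Rat.cast_zero, zero_mul, add_zero, one_mul] at h1
    rw [Finset.sum_congr rfl (fun i _ => by
      rw [hwdef i, hhdef i, wedge_expand])] at h1
    rw [← Finset.sum_smul] at h1
    rcases smul_eq_zero.mp h1 with h0 | h0
    · exact h0
    · exact absurd h0 hW
  -- s = √f gives `∑ (aw·ah − f·bw·bh) = 0`
  have e2 : ∑ i, (aw i * ah i - bw i * ((f : ℚ) * bh i)) = 0 := by
    have h2 := hSAFs 0 1
    simp only [Rat.cast_one, Rat.cast_zero, zero_add, one_mul] at h2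
    have hterm : ∀ i, wedge (w i) (x * h i)
        = (aw i * (ah i) - bw i * ((f : ℚ) * bh i)) • wedge 1 x := by
      intro i
      have hxh : x * h i = (((f : ℚ) * bh i : ℚ) : ℝ) + ((ah i : ℚ) : ℝ) * x := by
        rw [hhdef i]
        push_cast
        linear_combination (bh i : ℝ) * hxx
      rw [hwdef i, hxh, wedge_expand]
    rw [Finset.sum_congr rfl (fun i _ => hterm i), ← Finset.sum_smul] at h2
    rcases smul_eq_zero.mp h2 with h0 | h0
    · exact h0
    · exact absurd h0 hW
  constructor
  · have : ∑ i, w i * h' i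
        = ((∑ i, (aw i * ah i - bw i * ((f : ℚ) * bh i)) : ℚ) : ℝ)
          - ((∑ i, (aw i * bh i - bw i * ah i) : ℚ) : ℝ) * x := by
      push_cast
      rw [Finset.sum_congr rfl (fun i _ => by rw [hwdef i, hh'def i])]
      rw [Finset.sum_mul, ← Finset.sum_sub_distrib]
      refine Finset.sum_congr rfl (fun i _ => ?_)
      linear_combination (-(bw i : ℝ) * (bh i : ℝ)) * hxx
    rw [this, e1, e2]
    norm_num
  · have : ∑ i, w' i * h i
        = ((∑ i, (aw i * ah i - bw i * ((f : ℚ) * bh i)) : ℚ) : ℝ)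
          + ((∑ i, (aw i * bh i - bw i * ah i) : ℚ) : ℝ) * x := by
      push_cast
      rw [Finset.sum_congr rfl (fun i _ => by rw [hw'def i, hhdef i])]
      rw [Finset.sum_mul, ← Finset.sum_add_distrib]
      refine Finset.sum_congr rfl (fun i _ => ?_)
      linear_combination (-(bw i : ℝ) * (bh i : ℝ)) * hxx
    rw [this, e1, e2]
    norm_num
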